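/- For B_kk' = ((p_k p_k')^{-1} E_kk') ∘ J(p) with k ≠ k' and Σ = A ∘ I(p) + B ∘ J(p), one has tr(B_kk' Σ B_kk' Σ) = b_k'k². -/

import Mathlib

open Matrix

/-- `A ∘ I(p)`: block-diagonal matrix with `a k • I_{p k}` as `k`-th diagonal block. -/
noncomputable def blockI {K : ℕ} (p : Fin K → ℕ) (a : Fin K → ℝ) :
    Matrix ((k : Fin K) × Fin (p k)) ((k : Fin K) × Fin (p k)) ℝ :=
  Matrix.diagonal fun x => a x.1

/-- `B ∘ J(p)`: block matrix whose `(k,k')` block is `B k k' • 1_{p k × p k'}`. -/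
noncomputable def blockJ {K : ℕ} (p : Fin K → ℕ) (B : Matrix (Fin K) (Fin K) ℝ) :
    Matrix ((k : Fin K) × Fin (p k)) ((k : Fin K) × Fin (p k)) ℝ :=
  Matrix.of fun x y => B x.1 y.1


lemma blockJ_add {K : ℕ} (p : Fin K → ℕ) (B1 B2 : Matrix (Fin K) (Fin K) ℝ) :
    blockJ p (B1 + B2) = blockJ p B1 + blockJ p B2 := by
  ext x y; simp [blockJ]

lemma blockJ_mul_blockI {K : ℕ} (p : Fin K → ℕ) (B1 : Matrix (Fin K) (Fin K) ℝ)
    (a : Fin K → ℝ) :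
    blockJ p B1 * blockI p a = blockJ p (B1 * Matrix.diagonal a) := by
  ext x y
  simp [blockJ, blockI, Matrix.mul_diagonal]

lemma blockJ_mul_blockJ {K : ℕ} (p : Fin K → ℕ) (B1 B2 : Matrix (Fin K) (Fin K) ℝ) :
    blockJ p B1 * blockJ p B2
      = blockJ p (B1 * (Matrix.diagonal fun l => (p l : ℝ)) * B2) := by
  ext x y
  rw [Matrix.mul_apply, ← Finset.univ_sigma_univ, Finset.sum_sigma]
  show _ = (B1 * Matrix.diagonal (fun l => (p l : ℝ)) * B2) x.1 y.1
  rw [Matrix.mul_apply]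
  simp only [Matrix.mul_diagonal, blockJ, Matrix.of_apply, Finset.sum_const,
    Finset.card_univ, Fintype.card_fin, nsmul_eq_mul]
  exact Finset.sum_congr rfl fun l _ => by ring

lemma trace_blockJ {K : ℕ} (p : Fin K → ℕ) (C : Matrix (Fin K) (Fin K) ℝ) :
    Matrix.trace (blockJ p C) = ∑ l, (p l : ℝ) * C l l := by
  rw [Matrix.trace, ← Finset.univ_sigma_univ, Finset.sum_sigma]
  simp [blockJ, Matrix.diag, mul_comm]

/-- For `B_kk' = ((p_k p_k')⁻¹ E_kk') ∘ J(p)` with `k ≠ k'` and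
`Σ = A ∘ I(p) + B ∘ J(p)`, one has `tr(B_kk' Σ B_kk' Σ) = b_k'k²`. -/
theorem trace_Bkk'_sq {K : ℕ} (p : Fin K → ℕ) (hp : ∀ l, 1 < p l)
    (a : Fin K → ℝ) (B : Matrix (Fin K) (Fin K) ℝ) (hB : B.IsSymm)
    (k k' : Fin K) (hkk' : k ≠ k')
    (M : Matrix ((l : Fin K) × Fin (p l)) ((l : Fin K) × Fin (p l)) ℝ)
    (hM : M = blockJ p (((p k : ℝ) * (p k' : ℝ))⁻¹ • Matrix.single k k' 1)) :
    Matrix.trace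
        ((M * (blockI p a + blockJ p B)) * (M * (blockI p a + blockJ p B)))
      = (B k' k) ^ 2 := by
  subst hM
  rw [mul_add, blockJ_mul_blockI, blockJ_mul_blockJ, ← blockJ_add, blockJ_mul_blockJ,
    trace_blockJ]
  set c : ℝ := ((p k : ℝ) * (p k' : ℝ))⁻¹ with hc
  set C : Matrix (Fin K) (Fin K) ℝ := c • Matrix.single k k' 1 with hC
  set P : Matrix (Fin K) (Fin K) ℝ := Matrix.diagonal fun l => (p l : ℝ) with hP
  set D : Matrix (Fin K) (Fin K) ℝ := C * Matrix.diagonal a + C * P * B with hDdef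
  have e1 : ∀ (X : Matrix (Fin K) (Fin K) ℝ) (m : Fin K), (C * X) k m = c * X k' m := by
    intro X m
    rw [hC, Matrix.smul_mul, Matrix.smul_apply, Matrix.single_mul_apply_same,
      one_mul, smul_eq_mul]
  have e0 : ∀ (X : Matrix (Fin K) (Fin K) ℝ) (l m : Fin K), l ≠ k → (C * X) l m = 0 := by
    intro X l m hl
    rw [hC, Matrix.smul_mul, Matrix.smul_apply,
      Matrix.single_mul_apply_of_ne _ _ _ _ _ hl, smul_zero]
  have hD : ∀ l m, D l m
      = (if l = k then c * (Matrix.diagonal a k' m + (p k' : ℝ) * B k' m) else 0) := by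
    intro l m
    by_cases hl : l = k
    · rw [if_pos hl, hl, hDdef, Matrix.add_apply, Matrix.mul_assoc, e1, e1, mul_add]
      congr 2
      rw [hP, Matrix.diagonal_mul]
    · rw [if_neg hl, hDdef, Matrix.add_apply, Matrix.mul_assoc, e0 _ _ _ hl, e0 _ _ _ hl,
        add_zero]
  have hDkk : D k k = c * (p k' : ℝ) * B k' k := by
    rw [hD, if_pos rfl, Matrix.diagonal_apply_ne' _ hkk']
    ring
  have hDPD : ∀ l, (D * P * D) l l
      = (if l = k then c * (p k' : ℝ) * B k' k * (p k : ℝ) * (c * (p k' : ℝ) * B k' k)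
          else 0) := by
    intro l
    rw [Matrix.mul_apply]
    by_cases hl : l = k
    · rw [if_pos hl, hl, Finset.sum_eq_single k]
      · rw [hP, Matrix.mul_diagonal, hDkk]
      · intro m _ hm
        rw [hP, Matrix.mul_diagonal, hD m k, if_neg hm]
        ring
      · simp
    · rw [if_neg hl]
      apply Finset.sum_eq_zero
      intro m _
      rw [hP, Matrix.mul_diagonal, hD, if_neg hl]
      ring
  rw [Finset.sum_eq_single k]
  · rw [hDPD, if_pos rfl]
    have h1 : (p k : ℝ) ≠ 0 := by have := hp k; positivity
    have h2 : (p k' : ℝ) ≠ 0 := by have := hp k'; positivity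
    rw [hc]
    field_simp
  · intro m _ hm
    rw [hDPD, if_neg hm, mul_zero]
  · simp
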